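/- Hereditary operator plus closed compatible 2-forms yield a Hamiltonian pair: let R : X → X be hereditary, Ω₀ a 2-form compatible with R with the map x ↦ i_xΩ₀ invertible, H₀ defined by Ω₀(H₀ξ, y) = ξ(y), Hₙ = RⁿH₀, and Ωₙ = Ω₀∘Rⁿ. If dΩₖ = 0 for all k ≥ 0, then the Schouten bracket [Hₘ, Hₙ](ξ,η,ζ) := ξ(Hₘ L_{Hₙη} ζ) + ξ(Hₙ L_{Hₘη} ζ) + cyclic(ξ,η,ζ) vanishes for all m, n ≥ 0 and all 1-forms ξ, η, ζ. -/
import Mathlib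


/-- A 1-form: an `F`-linear map `X → F`. -/
def OneForm {F X : Type*} [CommRing F] [AddCommGroup X] [Module F X]
    (ξ : X → F) : Prop :=
  (∀ y z : X, ξ (y + z) = ξ y + ξ z) ∧ ∀ (a : F) (y : X), ξ (a • y) = a * ξ y

/-- The Lie derivative of a 1-form: `(L_xζ)(y) = x(ζ(y)) − ζ([x,y])`. -/
def lieDeriv1 {F X : Type*} [Ring F] [LieRing X] (ρ : X → F → F)
    (x : X) (ζ : X → F) : X → F :=
  fun y => ρ x (ζ y) - ζ ⁅x, y⁆

/-- The Chevalley–Eilenberg differential of a 2-form. -/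
def ceDiff2 {F X : Type*} [Ring F] [LieRing X]
    (ρ : X → F → F) (Ω : X → X → F) : X → X → X → F :=
  fun x y z =>
    ρ x (Ω y z) - ρ y (Ω x z) + ρ z (Ω x y)
    - Ω ⁅x, y⁆ z + Ω ⁅x, z⁆ y - Ω ⁅y, z⁆ x

/-- A hereditary operator together with closed compatible 2-forms yields a
Hamiltonian pair: with `H₀` the inverse of `x ↦ i_xΩ₀`, `Hₙ = RⁿH₀` and
`Ωₙ = Ω₀∘Rⁿ`, if `dΩₖ = 0` for all `k`, then the Schouten bracket
`[Hₘ, Hₙ](ξ,η,ζ) = ξ(Hₘ L_{Hₙη}ζ) + ξ(Hₙ L_{Hₘη}ζ) + cyclic(ξ,η,ζ)` vanishes. -/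
theorem hamiltonian_pair_of_hereditary
    {F X : Type*} [CommRing F] [Algebra ℝ F] [LieRing X] [LieAlgebra ℝ X]
    [Module F X]
    (ρ : X → F → F)
    (hρadd : ∀ (x : X) (a b : F), ρ x (a + b) = ρ x a + ρ x b)
    (hρderiv : ∀ (x : X) (a b : F), ρ x (a * b) = ρ x a * b + a * ρ x b)
    (hρlie : ∀ (x y : X) (a : F), ρ ⁅x, y⁆ a = ρ x (ρ y a) - ρ y (ρ x a))
    (hρaddX : ∀ (x y : X) (a : F), ρ (x + y) a = ρ x a + ρ y a)
    (hρsmulX : ∀ (a : F) (x : X) (b : F), ρ (a • x) b = a * ρ x b)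
    (hlie_smul : ∀ (x : X) (a : F) (y : X),
      ⁅x, a • y⁆ = a • ⁅x, y⁆ + ρ x a • y)
    (R : X →ₗ[F] X)
    -- R is hereditary
    (hR : ∀ x y : X,
      ⁅R x, R y⁆ - R ⁅R x, y⁆ - R ⁅x, R y⁆ + R (R ⁅x, y⁆) = 0)
    (Ω : X →ₗ[F] X →ₗ[F] F)
    (halt : ∀ x : X, Ω x x = 0)
    (hcompat : ∀ x y : X, Ω (R x) y = Ω x (R y))
    -- the map x ↦ i_xΩ₀ is invertible onto 1-forms, with inverse H₀
    (H₀ : (X → F) → X)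
    (hH : ∀ ξ : X → F, OneForm ξ → ∀ y : X, Ω (H₀ ξ) y = ξ y)
    (hinv : ∀ ξ : X → F, OneForm ξ → ∃! x : X, ∀ y : X, Ω x y = ξ y)
    -- dΩₖ = 0 for all k ≥ 0
    (hclosed : ∀ (k : ℕ) (x y z : X),
      ceDiff2 ρ (fun a b => Ω ((R ^ k) a) b) x y z = 0) :
    ∀ (m n : ℕ) (ξ η ζ : X → F),
      OneForm ξ → OneForm η → OneForm ζ →
      ξ ((R ^ m) (H₀ (lieDeriv1 ρ ((R ^ n) (H₀ η)) ζ)))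
      + ξ ((R ^ n) (H₀ (lieDeriv1 ρ ((R ^ m) (H₀ η)) ζ)))
      + η ((R ^ m) (H₀ (lieDeriv1 ρ ((R ^ n) (H₀ ζ)) ξ)))
      + η ((R ^ n) (H₀ (lieDeriv1 ρ ((R ^ m) (H₀ ζ)) ξ)))
      + ζ ((R ^ m) (H₀ (lieDeriv1 ρ ((R ^ n) (H₀ ξ)) η)))
      + ζ ((R ^ n) (H₀ (lieDeriv1 ρ ((R ^ m) (H₀ ξ)) η))) = 0 := by
  -- basic consequences of the derivation property
  have hρzero : ∀ x : X, ρ x (0 : F) = 0 := by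
    intro x
    have h := hρadd x 0 0
    rw [add_zero] at h
    linear_combination -h
  have hρneg : ∀ (x : X) (c : F), ρ x (-c) = -(ρ x c) := by
    intro x c
    have h := hρadd x c (-c)
    rw [add_neg_cancel, hρzero] at h
    linear_combination -h
  -- skew-symmetry of Ω
  have hsk : ∀ x y : X, Ω x y = -(Ω y x) := by
    intro x y
    have h := halt (x + y)
    simp only [map_add, LinearMap.add_apply, halt] at h
    linear_combination h
  -- commuting a single R past a power
  have hc : ∀ (k : ℕ) (t : X), R ((R ^ k) t) = (R ^ k) (R t) := by
    intro k t
    rw [← Module.End.mul_apply, ← Module.End.mul_apply, ← pow_succ', pow_succ,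
      Module.End.mul_apply]
  -- compatibility for powers of R
  have hcp : ∀ (k : ℕ) (x y : X), Ω ((R ^ k) x) y = Ω x ((R ^ k) y) := by
    intro k
    induction k with
    | zero => intro x y; simp
    | succ k ih =>
      intro x y
      have p : ∀ t : X, (R ^ (k + 1)) t = R ((R ^ k) t) := by
        intro t
        rw [pow_succ', Module.End.mul_apply]
      rw [p x, p y, hcompat, ih, hc]
  -- rearranged hereditary property
  have hR' : ∀ x y : X, ⁅R x, R y⁆ = R ⁅R x, y⁆ + R ⁅x, R y⁆ - R (R ⁅x, y⁆) := by
    intro x y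
    have h := hR x y
    rw [← sub_eq_zero]
    rw [show ⁅R x, R y⁆ - (R ⁅R x, y⁆ + R ⁅x, R y⁆ - R (R ⁅x, y⁆))
        = ⁅R x, R y⁆ - R ⁅R x, y⁆ - R ⁅x, R y⁆ + R (R ⁅x, y⁆) from by abel]
    exact h
  -- hereditary property for powers of R
  have hpow : ∀ (b a : ℕ) (x y : X),
      ⁅(R ^ a) x, (R ^ b) y⁆ =
        (R ^ b) ⁅(R ^ a) x, y⁆ + (R ^ a) ⁅x, (R ^ b) y⁆
          - (R ^ b) ((R ^ a) ⁅x, y⁆) := by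
    intro b
    induction b with
    | zero => intro a x y; simp
    | succ b ihb =>
      intro a
      induction a with
      | zero => intro x y; simp
      | succ a iha =>
        intro x y
        have pa : ∀ t : X, (R ^ (a + 1)) t = (R ^ a) (R t) := by
          intro t; rw [pow_succ, Module.End.mul_apply]
        have pb : ∀ t : X, (R ^ (b + 1)) t = (R ^ b) (R t) := by
          intro t; rw [pow_succ, Module.End.mul_apply]
        have e := hR' ((R ^ a) x) ((R ^ b) y)
        rw [hc a x, hc b y, ← pa x, ← pb y] at e
        rw [ihb (a + 1) x y, iha x y, ihb a x y] at e
        rw [e]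
        simp only [pow_succ, Module.End.mul_apply, map_add, map_sub, hc]
        abel
  -- the Lie derivative of a 1-form is a 1-form
  have hof : ∀ (x : X) (θ : X → F), OneForm θ → OneForm (lieDeriv1 ρ x θ) := by
    intro x θ hθ
    constructor
    · intro y z
      simp only [lieDeriv1, lie_add, hθ.1, hρadd]
      ring
    · intro a y
      simp only [lieDeriv1, hlie_smul]
      rw [hθ.2, hρderiv, hθ.1, hθ.2, hθ.2]
      ring
  -- reduction of the basic Schouten-bracket summand
  have key : ∀ (k : ℕ) (x : X) (α β : X → F), OneForm α → OneForm β →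
      α ((R ^ k) (H₀ (lieDeriv1 ρ x β))) =
        Ω (H₀ β) ⁅x, (R ^ k) (H₀ α)⁆
          - ρ x (Ω (H₀ β) ((R ^ k) (H₀ α))) := by
    intro k x α β hα hβ
    have h1 : α ((R ^ k) (H₀ (lieDeriv1 ρ x β)))
        = Ω (H₀ α) ((R ^ k) (H₀ (lieDeriv1 ρ x β))) :=
      (hH α hα _).symm
    have h2 : Ω (H₀ α) ((R ^ k) (H₀ (lieDeriv1 ρ x β)))
        = Ω ((R ^ k) (H₀ α)) (H₀ (lieDeriv1 ρ x β)) := (hcp k _ _).symm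
    have h3 : Ω ((R ^ k) (H₀ α)) (H₀ (lieDeriv1 ρ x β))
        = -(Ω (H₀ (lieDeriv1 ρ x β)) ((R ^ k) (H₀ α))) := hsk _ _
    have h4 : Ω (H₀ (lieDeriv1 ρ x β)) ((R ^ k) (H₀ α))
        = lieDeriv1 ρ x β ((R ^ k) (H₀ α)) := hH _ (hof x β hβ) _
    rw [h1, h2, h3, h4]
    simp only [lieDeriv1]
    rw [← hH β hβ ((R ^ k) (H₀ α)), ← hH β hβ ⁅x, (R ^ k) (H₀ α)⁆]
    ring
  intro m n ξ η ζ hξ hη hζ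
  rw [key m ((R ^ n) (H₀ η)) ξ ζ hξ hζ, key n ((R ^ m) (H₀ η)) ξ ζ hξ hζ,
      key m ((R ^ n) (H₀ ζ)) η ξ hη hξ, key n ((R ^ m) (H₀ ζ)) η ξ hη hξ,
      key m ((R ^ n) (H₀ ξ)) ζ η hζ hη, key n ((R ^ m) (H₀ ξ)) ζ η hζ hη]
  set u := H₀ ξ with hu
  set v := H₀ η with hv
  set w := H₀ ζ with hw
  -- swapping powers of R
  have hswap : ∀ t : X, (R ^ n) ((R ^ m) t) = (R ^ m) ((R ^ n) t) := by
    intro t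
    rw [← Module.End.mul_apply, ← Module.End.mul_apply, ← pow_add, ← pow_add,
      add_comm]
  -- flipping Ω-atoms
  have hflip : ∀ (k : ℕ) (x y : X), Ω x ((R ^ k) y) = -(Ω y ((R ^ k) x)) := by
    intro k x y
    rw [← hcp, hsk]
  have flipbr : ∀ x y z : X, Ω ⁅x, y⁆ z = -(Ω z ⁅x, y⁆) := fun x y z => hsk _ _
  -- skew-symmetry of the bracket
  have bsk : ∀ x y : X, ⁅x, y⁆ = -⁅y, x⁆ := by
    intro x y
    exact (lie_skew x y).symm
  -- closedness instances
  have C1 := hclosed m u ((R ^ n) v) w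
  have C2 := hclosed m u v ((R ^ n) w)
  have C3 := hclosed m ((R ^ n) u) v w
  have C4 := hclosed n u ((R ^ m) v) w
  have C5 := hclosed n u v ((R ^ m) w)
  have C6 := hclosed n ((R ^ m) u) v w
  have C7 := hclosed (m + n) u v w
  simp only [ceDiff2] at C1 C2 C3 C4 C5 C6 C7
  simp only [pow_add, Module.End.mul_apply] at C7
  simp only [hpow, map_add, map_sub, map_neg, hρneg, hswap, hcp, flipbr,
    hflip m w u, hflip n w u,
    bsk ((R ^ n) v) u, bsk ((R ^ m) v) u, bsk v ((R ^ n) u), bsk v ((R ^ m) u),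
    bsk v u,
    bsk ((R ^ n) w) v, bsk ((R ^ m) w) v, bsk w ((R ^ n) v), bsk w ((R ^ m) v),
    bsk w v] at C1 C2 C3 C4 C5 C6 C7 ⊢
  linear_combination -C1 - C2 - C3 - C4 - C5 - C6 + 4 * C7
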